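/- arXiv:0807.0087 — 4 statements merged into one kernel-verified Lean document; each statement's English description precedes it below -/
import Mathlib

section
/- Let u be a proper strict ancestor of a node v in a directed acyclic graph N (i.e., u ≠ v, v is a descendant of u, and every path from a root of N to v contains u). If w is an intermediate node in some path from u to v, then u is also a strict ancestor of w (every path from a root of N to w contains u). -/
open Classical

/-- A walk (path) in a digraph: a nonempty list of vertices with consecutive arcs. -/
def IsWalk {V : Type} (E : V → V → Prop) (p : List V) : Prop := p ≠ [] ∧ p.Chain' E

/-- A path with origin `u` and end `v`. -/
def WalkFromTo {V : Type} (E : V → V → Prop) (u v : V) (p : List V) : Prop :=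
  IsWalk E p ∧ p.head? = some u ∧ p.getLast? = some v

/-- `v` is a descendant of `u` (possibly trivial path from `u` to `v`). -/
def Desc {V : Type} (E : V → V → Prop) (u v : V) : Prop := Relation.ReflTransGen E u v

/-- A root: a node with no incoming arcs. -/
def IsRootNode {V : Type} (E : V → V → Prop) (r : V) : Prop := ∀ u, ¬ E u r

/-- `u` is a strict ancestor of `v`: `v` is a descendant of `u` and every path
from a root to `v` contains `u`. -/
def StrictAnc {V : Type} (E : V → V → Prop) (u v : V) : Prop :=
  Desc E u v ∧ ∀ (r : V) (p : List V), IsRootNode E r → WalkFromTo E r v p → u ∈ p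

/-- In-degree. -/
noncomputable def indeg {V : Type} (E : V → V → Prop) (v : V) : ℕ := {u | E u v}.ncard
/-- Out-degree. -/
noncomputable def outdeg {V : Type} (E : V → V → Prop) (v : V) : ℕ := {w | E v w}.ncard

/-- Tree node: in-degree at most 1. -/
def IsTreeNode {V : Type} (E : V → V → Prop) (v : V) : Prop := indeg E v ≤ 1
/-- Hybrid node: in-degree at least 2. -/
def IsHybrid {V : Type} (E : V → V → Prop) (v : V) : Prop := 2 ≤ indeg E v
/-- Leaf: no outgoing arcs. -/
def IsLeaf {V : Type} (E : V → V → Prop) (v : V) : Prop := ∀ w, ¬ E v w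

/-- Acyclicity: no non-trivial path from a node to itself. -/
def Acyclic {V : Type} (E : V → V → Prop) : Prop := ∀ v, ¬ Relation.TransGen E v v

/-- A hybridization network: a rooted DAG whose single root has out-degree > 1. -/
structure IsHybNet {V : Type} (E : V → V → Prop) (r : V) : Prop where
  acyclic : Acyclic E
  isRoot : IsRootNode E r
  uniqueRoot : ∀ x, IsRootNode E x → x = r
  rootOut : 2 ≤ outdeg E r

/-- Tree-child condition: every internal node has a tree-node child. -/
def TreeChild {V : Type} (E : V → V → Prop) : Prop :=
  ∀ v, ¬ IsLeaf E v → ∃ w, E v w ∧ IsTreeNode E w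

/-- Time consistency: a temporal representation exists. -/
def TimeConsistent {V : Type} (E : V → V → Prop) : Prop :=
  ∃ τ : V → ℕ, ∀ u v, E u v → (IsTreeNode E v → τ u < τ v) ∧ (IsHybrid E v → τ u = τ v)

/-- The leaves are bijectively labeled by `S` via `leaf`. -/
def LabelsLeaves {V S : Type} (E : V → V → Prop) (leaf : S → V) : Prop :=
  Function.Injective leaf ∧ (∀ s, IsLeaf E (leaf s)) ∧ ∀ v, IsLeaf E v → ∃ s, leaf s = v

/-- Distance: length of a shortest path from `u` to `v`. -/
noncomputable def dist {V : Type} (E : V → V → Prop) (u v : V) : ℕ :=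
  sInf {n | ∃ p, WalkFromTo E u v p ∧ p.length = n + 1}

/-- Height: largest length of a path from `v` to a leaf. -/
noncomputable def height {V : Type} (E : V → V → Prop) (v : V) : ℕ :=
  sSup {n | ∃ p w, WalkFromTo E v w p ∧ IsLeaf E w ∧ p.length = n + 1}

/-- Common ancestors of `u` and `v` that are strict ancestors of at least one of them. -/
def CSAset {V : Type} (E : V → V → Prop) (u v : V) : Set V :=
  {x | Desc E x u ∧ Desc E x v ∧ (StrictAnc E x u ∨ StrictAnc E x v)}

/-- `x` is a least common semi-strict ancestor of `u` and `v`. -/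
def IsLCSA {V : Type} (E : V → V → Prop) (u v x : V) : Prop :=
  x ∈ CSAset E u v ∧ ∀ y ∈ CSAset E u v, height E x ≤ height E y

/-- The least common semi-strict ancestor `[u,v]` (the root `r` witnesses nonemptiness). -/
noncomputable def lcsa {V : Type} (E : V → V → Prop) (r u v : V) : V :=
  @Classical.epsilon V ⟨r⟩ (IsLCSA E u v)

/-- `ℓ_N(u,v)`: the distance from `[u,v]` to `u`. -/
noncomputable def ell {V : Type} (E : V → V → Prop) (r u v : V) : ℕ :=
  dist E (lcsa E r u v) u

/-- `L_N(u,v) = ℓ_N(u,v) + ℓ_N(v,u)`: the LCSA-path length between `u` and `v`. -/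
noncomputable def pathLen {V : Type} (E : V → V → Prop) (r u v : V) : ℕ :=
  ell E r u v + ell E r v u

/-- `h_N(u,v)`: −1 if `[u,v]` is a strict ancestor of `u` only, 1 if of `v` only, 0 if of both. -/
noncomputable def hval {V : Type} (E : V → V → Prop) (r u v : V) : ℤ :=
  if StrictAnc E (lcsa E r u v) u then
    (if StrictAnc E (lcsa E r u v) v then 0 else -1)
  else 1

/-- Siblings: distinct nodes sharing a parent. -/
def Sibling {V : Type} (E : V → V → Prop) (u v : V) : Prop :=
  u ≠ v ∧ ∃ p, E p u ∧ E p v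

/-- A tree path: a non-trivial path whose end and intermediate nodes are tree nodes. -/
def TreePath {V : Type} (E : V → V → Prop) (p : List V) (u v : V) : Prop :=
  WalkFromTo E u v p ∧ 2 ≤ p.length ∧ ∀ w ∈ p.tail, IsTreeNode E w

/-- `v` is a tree descendant of `u`. -/
def TreeDesc {V : Type} (E : V → V → Prop) (u v : V) : Prop := ∃ p, TreePath E p u v

/-- Quasi-binary hybridization network. -/
def QuasiBinary {V : Type} (E : V → V → Prop) : Prop :=
  ∀ v : V, (indeg E v, outdeg E v) ∈ ({(0,2),(1,0),(1,2),(2,0),(2,1),(2,2)} : Set (ℕ × ℕ))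

/-- Fully resolved hybridization network node types. -/
def FullyResolvedHyb {V : Type} (E : V → V → Prop) : Prop :=
  ∀ v : V, (indeg E v, outdeg E v) ∈ ({(0,2),(1,0),(1,2),(2,0),(2,2)} : Set (ℕ × ℕ))

/-- Fully resolved phylogenetic network node types. -/
def FullyResolvedPhylo {V : Type} (E : V → V → Prop) : Prop :=
  ∀ v : V, (indeg E v, outdeg E v) ∈ ({(0,2),(1,0),(1,2),(2,1)} : Set (ℕ × ℕ))

/-- Phylogenetic network condition: every hybrid node has exactly one child, a tree node. -/
def PhyloNet {V : Type} (E : V → V → Prop) : Prop :=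
  ∀ v, IsHybrid E v → ∃ w, E v w ∧ IsTreeNode E w ∧ ∀ x, E v x → x = w

lemma walk_reflTransGen {V : Type} {E : V → V → Prop} :
    ∀ (p : List V) (a b : V), WalkFromTo E a b p → Relation.ReflTransGen E a b := by
  intro p
  induction p with
  | nil => intro a b h; exact absurd rfl h.1.1
  | cons x t ih =>
    intro a b h
    obtain ⟨⟨_, hch⟩, hh, hl⟩ := h
    simp at hh; subst hh
    cases t with
    | nil => simp at hl; subst hl; exact Relation.ReflTransGen.refl
    | cons y t' =>
      have hE : E x y := (List.isChain_cons_cons.mp hch).1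
      have : Relation.ReflTransGen E y b := by
        refine ih y b ⟨⟨by simp, (List.isChain_cons_cons.mp hch).2⟩, rfl, ?_⟩
        rw [← hl]; simp [List.getLast?]
      exact Relation.ReflTransGen.head hE this

lemma walk_transGen {V : Type} {E : V → V → Prop} {p : List V} {a b : V}
    (h : WalkFromTo E a b p) (hne : a ≠ b) : Relation.TransGen E a b := by
  rcases (Relation.reflTransGen_iff_eq_or_transGen.mp (walk_reflTransGen p a b h)) with h1 | h1
  · exact absurd h1.symm hne
  · exact h1

lemma walk_split {V : Type} {E : V → V → Prop} {p : List V} {a b w : V}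
    (h : WalkFromTo E a b p) (hw : w ∈ p) :
    ∃ p1 p2, p = p1 ++ w :: p2 ∧ WalkFromTo E a w (p1 ++ [w]) ∧ WalkFromTo E w b (w :: p2) := by
  obtain ⟨p1, p2, rfl⟩ := List.append_of_mem hw
  obtain ⟨⟨hne, hch⟩, hh, hl⟩ := h
  refine ⟨p1, p2, rfl, ?_, ?_⟩
  · constructor
    · exact ⟨by simp, ((List.isChain_append (l₁ := p1 ++ [w]) (l₂ := p2)).mp
        (by rw [List.append_assoc]; exact hch)).1⟩
    constructor
    · rw [← hh]
      cases p1 <;> simp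
    · simp
  · constructor
    · exact ⟨by simp, ((List.isChain_append (l₁ := p1) (l₂ := w :: p2)).mp hch).2.1⟩
    constructor
    · rfl
    · rw [← hl, List.getLast?_append]
      cases hlast : (w :: p2).getLast? with
      | none => simp at hlast
      | some z => simp [hlast]

lemma walk_glue {V : Type} {E : V → V → Prop} {q p2 : List V} {r w b : V}
    (hq : WalkFromTo E r w q) (hp : WalkFromTo E w b (w :: p2)) :
    WalkFromTo E r b (q ++ p2) := by
  obtain ⟨⟨hne, hch⟩, hh, hl⟩ := hq
  obtain ⟨⟨_, hch2⟩, _, hl2⟩ := hp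
  constructor
  · refine ⟨by simp [hne], (List.isChain_append).mpr ⟨hch, (List.isChain_cons.mp hch2).2, ?_⟩⟩
    intro x hx y hy
    rw [hl] at hx; simp at hx; subst hx
    exact (List.isChain_cons.mp hch2).1 y hy
  constructor
  · rw [← hh]; cases q <;> simp_all
  · cases p2 with
    | nil => simp at hl2; subst hl2; simpa using hl
    | cons z t =>
      rw [← hl2, List.getLast?_append, List.getLast?_cons_cons]
      cases hlast : (z :: t).getLast? with
      | none => simp at hlast
      | some x => simp [hlast]

/-- If `u` is a proper strict ancestor of `v` in a DAG and `w` is an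
intermediate node of a path from `u` to `v`, then `u` is a strict ancestor of `w`. -/
theorem stmt0 {V : Type} [Fintype V] (E : V → V → Prop)
    (hacyc : Acyclic E) (u v : V) (hne : u ≠ v) (hdesc : Desc E u v)
    (hstrict : ∀ (r : V) (p : List V), IsRootNode E r → WalkFromTo E r v p → u ∈ p)
    (w : V) (p : List V) (hp : WalkFromTo E u v p)
    (hw : w ∈ p) (hwu : w ≠ u) (hwv : w ≠ v) :
    StrictAnc E u w := by
  obtain ⟨p1, p2, rfl, hpre, hsuf⟩ := walk_split hp hw
  have hduw : Desc E u w := walk_reflTransGen _ _ _ hpre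
  refine ⟨hduw, ?_⟩
  intro r q hr hq
  by_contra hu
  have hglue : WalkFromTo E r v (q ++ p2) := walk_glue hq hsuf
  have hmem : u ∈ q ++ p2 := hstrict r (q ++ p2) hr hglue
  rcases List.mem_append.mp hmem with h1 | h1
  · exact hu h1
  · -- u ∈ p2: walk from w to u gives TransGen w u; combined with u→w gives cycle
    obtain ⟨q1, q2, _, hpre2, _⟩ := walk_split hsuf (List.mem_cons_of_mem _ h1)
    have h2 : Relation.TransGen E w u := walk_transGen hpre2 hwu
    have h3 : Relation.TransGen E u w :=
      (Relation.reflTransGen_iff_eq_or_transGen.mp hduw).resolve_left (fun h => hwu h)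
    exact hacyc u (h3.trans h2)
end

section
/- Let N be a DAG and let u, v be nodes of N such that v is not a descendant of u. If u is a tree node (has exactly one parent) with parent u', then CSA(u,v) = CSA(u',v), where CSA(x,y) is the set of common ancestors of x and y that are strict ancestors of at least one of them. Consequently the least common semi-strict ancestor satisfies [u,v] = [u',v]. -/
open Classical

/-- A walk from a root to `u` (whose only parent is `u'`) decomposes as a walk to `u'`
followed by `u`. -/
lemma walk_to_parent {V : Type} {E : V → V → Prop} {r u u' : V}
    (hroot : IsRootNode E r) (hparent : E u' u) (honly : ∀ x, E x u → x = u')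
    {p : List V} (hp : WalkFromTo E r u p) :
    ∃ q, WalkFromTo E r u' q ∧ p = q ++ [u] := by
  obtain ⟨⟨hne, hchain⟩, hhead, hlast⟩ := hp
  have hdecomp : p.dropLast ++ [p.getLast hne] = p := List.dropLast_append_getLast hne
  have hgl : p.getLast hne = u := by
    have := List.getLast?_eq_getLast hne
    rw [hlast] at this; exact (Option.some.inj this).symm
  set q := p.dropLast with hq
  have hpq : p = q ++ [u] := by rw [← hgl]; exact hdecomp.symm
  rcases eq_or_ne q [] with hq0 | hq0
  · exfalso
    have : p = [u] := by rw [hpq, hq0]; rfl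
    rw [this] at hhead
    simp at hhead
    exact hroot u' (hhead ▸ hparent)
  · refine ⟨q, ⟨⟨hq0, ?_⟩, ?_, ?_⟩, hpq⟩
    · have := hpq ▸ hchain
      exact (List.isChain_append.mp this).1
    · have := hpq ▸ hhead
      rw [List.head?_append] at this
      simpa [List.head?_eq_head hq0] using this
    · have := hpq ▸ hchain
      have hE : E (q.getLast hq0) u := by
        have h3 := (List.isChain_append.mp this).2.2
        exact h3 _ (List.getLast?_eq_getLast hq0) u rfl
      have : q.getLast hq0 = u' := honly _ hE
      rw [List.getLast?_eq_getLast hq0, this]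

/-- A walk to `u'` extends to a walk to `u`. -/
lemma walk_extend {V : Type} {E : V → V → Prop} {r u u' : V}
    (hparent : E u' u) {q : List V} (hq : WalkFromTo E r u' q) :
    WalkFromTo E r u (q ++ [u]) := by
  obtain ⟨⟨hne, hchain⟩, hhead, hlast⟩ := hq
  refine ⟨⟨by simp, ?_⟩, ?_, ?_⟩
  · rw [List.Chain', List.isChain_append]
    refine ⟨hchain, List.isChain_singleton u, ?_⟩
    intro x hx y hy
    simp at hy
    simp only [Option.mem_def, Option.some.injEq] at hx
    have hxu : x = u' := Option.some.inj (hx.symm.trans hlast)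
    rw [hxu, ← hy]; exact hparent
  · rw [List.head?_append]
    simpa [List.head?_eq_head hne] using hhead
  · simp

/-- If `v` is not a descendant of `u` and `u` is a tree node with (only)
parent `u'`, then `CSA(u,v) = CSA(u',v)` and hence `[u,v] = [u',v]`. -/
theorem stmt1 {V : Type} [Fintype V] (E : V → V → Prop) (hacyc : Acyclic E)
    (u u' v : V) (hnotdesc : ¬ Desc E u v)
    (hparent : E u' u) (honly : ∀ x, E x u → x = u') :
    CSAset E u v = CSAset E u' v ∧ ∀ x, IsLCSA E u v x ↔ IsLCSA E u' v x := by
  have hset : CSAset E u v = CSAset E u' v := by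
    ext x
    constructor
    · rintro ⟨hxu, hxv, hstrict⟩
      have hxne : x ≠ u := by rintro rfl; exact hnotdesc hxv
      -- Desc x u'
      have hxu' : Desc E x u' := by
        rcases hxu.cases_tail with h | ⟨c, hc, hcu⟩
        · exact absurd h.symm hxne
        · rwa [honly c hcu] at hc
      refine ⟨hxu', hxv, ?_⟩
      rcases hstrict with hs | hs
      · left
        refine ⟨hxu', fun r q hr hq => ?_⟩
        have hq' := walk_extend hparent hq
        have hmem := hs.2 r (q ++ [u]) hr hq'
        rcases List.mem_append.mp hmem with h | h
        · exact h
        · simp at h; exact absurd h hxne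
      · exact Or.inr hs
    · rintro ⟨hxu', hxv, hstrict⟩
      have hxu : Desc E x u := hxu'.tail hparent
      refine ⟨hxu, hxv, ?_⟩
      rcases hstrict with hs | hs
      · left
        refine ⟨hxu, fun r p hr hp => ?_⟩
        obtain ⟨q, hq, rfl⟩ := walk_to_parent hr hparent honly hp
        exact List.mem_append.mpr (Or.inl (hs.2 r q hr hq))
      · exact Or.inr hs
  refine ⟨hset, fun x => ?_⟩
  unfold IsLCSA
  rw [hset]
end

section
/- Let N be a quasi-binary tree-child time consistent hybridization network on taxa S. Two leaves i, j are sibling tree leaves (so the reduction R(i;j) can be applied) if, and only if, L_N(i,j) = 2 and L_N(i,k) = L_N(j,k) for every leaf k ∈ S \ {i,j}. -/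
open Classical

section WalkLemmas

variable {V : Type} {E : V → V → Prop} {u v w c : V} {p q : List V}

lemma walk_single (h : WalkFromTo E u v [w]) : u = w ∧ v = w := by
  obtain ⟨_, h1, h2⟩ := h
  simp [List.head?] at h1 h2
  exact ⟨h1.symm, h2.symm⟩

lemma walk_len_one (h : WalkFromTo E u v p) (hl : p.length = 1) : u = v := by
  match p, hl with
  | [a], _ => obtain ⟨h1, h2⟩ := walk_single h; rw [h1, h2]

lemma walk_snoc (h : WalkFromTo E u c p) (hcv : E c v) : WalkFromTo E u v (p ++ [v]) := by
  obtain ⟨⟨hne, hch⟩, h1, h2⟩ := h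
  refine ⟨⟨by simp, ?_⟩, ?_, by simp⟩
  · unfold List.Chain'; rw [List.isChain_append]
    refine ⟨hch, List.isChain_singleton _, ?_⟩
    intro x hx y hy
    simp at hy
    rw [h2] at hx; simp at hx; subst hx; subst hy; exact hcv
  · rw [List.head?_append, h1]; rfl

lemma walk_split_s9 (h : WalkFromTo E u v p) (hl : 2 ≤ p.length) :
    ∃ p' c, p = p' ++ [v] ∧ p' ≠ [] ∧ WalkFromTo E u c p' ∧ E c v := by
  obtain ⟨⟨hne, hch⟩, h1, h2⟩ := h
  rcases List.eq_nil_or_concat p with rfl | ⟨q, a, rfl⟩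
  · simp at hne
  · rw [List.concat_eq_append] at *
    have hav : a = v := by rw [List.getLast?_concat] at h2; exact (Option.some_inj.mp h2)
    subst hav
    clear h2
    have hqne : q ≠ [] := by
      rintro rfl; simp at hl
    unfold List.Chain' at hch; rw [List.isChain_append] at hch
    obtain ⟨hq, -, hlink⟩ := hch
    refine ⟨q, q.getLast hqne, rfl, hqne, ⟨⟨hqne, hq⟩, ?_, ?_⟩, ?_⟩
    · rw [List.head?_append] at h1
      rcases q with _ | ⟨b, t⟩
      · simp at hqne
      · simpa using h1
    · exact List.getLast?_eq_getLast hqne ▸ rfl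
    · exact hlink _ (by rw [List.getLast?_eq_getLast hqne]; rfl) _ rfl

lemma desc_of_walk (h : WalkFromTo E u v p) : Desc E u v := by
  induction p generalizing u with
  | nil => exact absurd rfl h.1.1
  | cons a t ih =>
    obtain ⟨⟨-, hch⟩, h1, h2⟩ := h
    simp at h1; subst h1
    rcases t with _ | ⟨b, t'⟩
    · simp [List.head?] at h2; subst h2; exact Relation.ReflTransGen.refl
    · unfold List.Chain' at hch; rw [List.isChain_cons_cons] at hch
      have hbv : Desc E b v := ih ⟨⟨by simp, hch.2⟩, rfl, by simpa using h2⟩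
      exact Relation.ReflTransGen.head hch.1 hbv

lemma walk_of_desc (h : Desc E u v) : ∃ p, WalkFromTo E u v p := by
  induction h with
  | refl => exact ⟨[u], ⟨by simp, List.isChain_singleton _⟩, rfl, rfl⟩
  | tail _ hbc ih => obtain ⟨p, hp⟩ := ih; exact ⟨_, walk_snoc hp hbc⟩

lemma walk_append (h1 : WalkFromTo E u v p) (h2 : WalkFromTo E v w q) :
    WalkFromTo E u w (p ++ q.tail) ∧ (p ++ q.tail).length + 1 = p.length + q.length := by
  obtain ⟨⟨hpne, hpc⟩, hp1, hp2⟩ := h1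
  obtain ⟨⟨hqne, hqc⟩, hq1, hq2⟩ := h2
  rcases q with _ | ⟨a, t⟩
  · simp at hqne
  · simp at hq1; subst hq1
    rcases t with _ | ⟨b, t'⟩
    · simp [List.head?] at hq2; subst hq2
      exact ⟨⟨⟨by simpa using hpne, by simpa using hpc⟩, by simpa using hp1, by simpa using hp2⟩,
        by simp⟩
    · unfold List.Chain' at hqc; rw [List.isChain_cons_cons] at hqc
      constructor
      · refine ⟨⟨by simp [hpne], ?_⟩, ?_, ?_⟩
        · unfold List.Chain'; rw [List.isChain_append]
          refine ⟨hpc, hqc.2, ?_⟩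
          intro x hx y hy
          rw [hp2] at hx; simp at hx
          simp at hy
          subst hx; subst hy; exact hqc.1
        · rw [List.head?_append, hp1]; rfl
        · rw [List.getLast?_append]
          have hg : (b :: t').getLast? = some w := by simpa using hq2
          simp only [List.tail_cons, hg]; rfl
      · simp; omega

lemma walk_nodup (hac : Acyclic E) (h : WalkFromTo E u v p) : p.Nodup := by
  have hch : p.Chain' (Relation.TransGen E) := List.IsChain.imp (fun a b hab => .single hab) h.1.2
  haveI : IsTrans V (Relation.TransGen E) := ⟨fun _ _ _ => Relation.TransGen.trans⟩
  have := List.isChain_iff_pairwise.mp hch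
  exact this.imp (fun {a b} hab => by rintro rfl; exact hac a hab)

lemma walk_length_le {W : Type} [Fintype W] {E : W → W → Prop} {u v : W} {p : List W}
    (hac : Acyclic E) (h : WalkFromTo E u v p) : p.length ≤ Fintype.card W :=
  (walk_nodup hac h).length_le_card

end WalkLemmas

section Net

variable {V : Type} [Fintype V] {E : V → V → Prop} {u v w c r : V} {p q : List V}

lemma acyclic_wf (hac : Acyclic E) : WellFounded E := by
  haveI : IsTrans V (Relation.TransGen E) := ⟨fun _ _ _ => Relation.TransGen.trans⟩
  haveI : IsIrrefl V (Relation.TransGen E) := ⟨fun a => hac a⟩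
  exact Subrelation.wf (fun h => Relation.TransGen.single h)
    (Finite.wellFounded_of_trans_of_irrefl (Relation.TransGen E))

lemma acyclic_wf_swap (hac : Acyclic E) : WellFounded (Function.swap E) := by
  haveI : IsTrans V (Relation.TransGen (Function.swap E)) := ⟨fun _ _ _ => Relation.TransGen.trans⟩
  haveI : IsIrrefl V (Relation.TransGen (Function.swap E)) :=
    ⟨fun a h => hac a (Relation.transGen_swap.mp h)⟩
  exact Subrelation.wf (fun h => Relation.TransGen.single h)
    (Finite.wellFounded_of_trans_of_irrefl (Relation.TransGen (Function.swap E)))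

lemma root_desc (hac : Acyclic E) (hroot : ∀ x, IsRootNode E x → x = r) (v : V) :
    Desc E r v := by
  induction v using (acyclic_wf hac).induction with
  | _ v ih =>
    by_cases hv : ∃ u, E u v
    · obtain ⟨u, hu⟩ := hv
      exact Relation.ReflTransGen.tail (ih u hu) hu
    · push_neg at hv
      have : v = r := hroot v hv
      rw [this]
      exact Relation.ReflTransGen.refl

lemma exists_leaf_walk (hac : Acyclic E) (htc : TreeChild E) (v : V) :
    ∃ p k, WalkFromTo E v k p ∧ IsLeaf E k ∧ ∀ w ∈ p.tail, IsTreeNode E w := by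
  induction v using (acyclic_wf_swap hac).induction with
  | _ v ih =>
    by_cases hv : IsLeaf E v
    · exact ⟨[v], v, ⟨⟨by simp, List.isChain_singleton _⟩, rfl, rfl⟩, hv, by simp⟩
    · obtain ⟨w, hvw, hwt⟩ := htc v hv
      obtain ⟨p, k, hwalk, hk, htail⟩ := ih w hvw
      obtain ⟨⟨hpne, hpc⟩, hp1, hp2⟩ := hwalk
      refine ⟨v :: p, k, ⟨⟨by simp, ?_⟩, rfl, ?_⟩, hk, ?_⟩
      · unfold List.Chain'; rw [List.isChain_cons]
        exact ⟨fun y hy => by rw [hp1] at hy; simp at hy; rw [← hy]; exact hvw, hpc⟩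
      · rw [List.getLast?_cons, hp2]; cases p <;> simp_all
      · intro x hx
        rcases p with _ | ⟨a, t⟩
        · simp at hpne
        · have haw : a = w := by simpa using hp1
          simp at hx
          rcases hx with rfl | hx
          · exact haw ▸ hwt
          · exact htail x (by simpa using hx)

/-- the set of numbers of arcs of walks from `v` to a leaf -/
lemma height_set_nonempty (hac : Acyclic E) (htc : TreeChild E) (v : V) :
    {n | ∃ p w, WalkFromTo E v w p ∧ IsLeaf E w ∧ p.length = n + 1}.Nonempty := by
  obtain ⟨p, k, hw, hk, -⟩ := exists_leaf_walk hac htc v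
  have : p.length ≠ 0 := by simpa using hw.1.1
  exact ⟨p.length - 1, p, k, hw, hk, by omega⟩

lemma height_set_bdd (hac : Acyclic E) (v : V) :
    BddAbove {n | ∃ p w, WalkFromTo E v w p ∧ IsLeaf E w ∧ p.length = n + 1} := by
  refine ⟨Fintype.card V, fun n hn => ?_⟩
  obtain ⟨p, w, hw, -, hl⟩ := hn
  have := walk_length_le hac hw
  omega

lemma le_height (hac : Acyclic E) {n : ℕ}
    (hn : ∃ p w, WalkFromTo E v w p ∧ IsLeaf E w ∧ p.length = n + 1) : n ≤ height E v :=
  le_csSup (height_set_bdd hac v) hn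

lemma height_spec (hac : Acyclic E) (htc : TreeChild E) (v : V) :
    ∃ p w, WalkFromTo E v w p ∧ IsLeaf E w ∧ p.length = height E v + 1 :=
  Nat.sSup_mem (height_set_nonempty hac htc v) (height_set_bdd hac v)

lemma height_lt (hac : Acyclic E) (htc : TreeChild E) (hd : Desc E u v) (hne : u ≠ v) :
    height E v < height E u := by
  obtain ⟨p, w, hw, hkw, hl⟩ := height_spec hac htc v
  obtain ⟨q, hq⟩ := walk_of_desc hd
  have hq2 : 2 ≤ q.length := by
    rcases q with _ | ⟨a, t⟩
    · exact absurd rfl hq.1.1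
    · rcases t with _ | _
      · exact absurd (walk_len_one hq (by simp)) hne
      · simp
  obtain ⟨hw2, hlen⟩ := walk_append hq hw
  have h1 : (q ++ p.tail).length - 1 ≤ height E u :=
    le_height hac ⟨q ++ p.tail, w, hw2, hkw, by omega⟩
  omega

end Net

section Dist

variable {V : Type} {E : V → V → Prop} {u v w c z : V} {p q : List V}

lemma wdist_set_nonempty (h : Desc E u v) :
    {n | ∃ p, WalkFromTo E u v p ∧ p.length = n + 1}.Nonempty := by
  obtain ⟨p, hp⟩ := walk_of_desc h
  have : p.length ≠ 0 := by simpa using hp.1.1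
  exact ⟨p.length - 1, p, hp, by omega⟩

lemma wdist_spec (h : Desc E u v) :
    ∃ p, WalkFromTo E u v p ∧ p.length = dist E u v + 1 :=
  Nat.sInf_mem (wdist_set_nonempty h)

lemma wdist_le {n : ℕ} (h : ∃ p, WalkFromTo E u v p ∧ p.length = n + 1) : dist E u v ≤ n :=
  Nat.sInf_le h

lemma wdist_self (u : V) : dist E u u = 0 := by
  have : 0 ∈ {n | ∃ p, WalkFromTo E u u p ∧ p.length = n + 1} :=
    ⟨[u], ⟨⟨by simp, List.isChain_singleton _⟩, rfl, rfl⟩, rfl⟩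
  exact Nat.sInf_eq_zero.mpr (Or.inl this)

lemma wdist_pos (h : Desc E u v) (hne : u ≠ v) : 1 ≤ dist E u v := by
  by_contra hlt
  have h0 : dist E u v = 0 := by omega
  obtain ⟨p, hp, hl⟩ := wdist_spec h
  rw [h0] at hl
  exact hne (walk_len_one hp hl)

lemma wdist_eq_zero (h : Desc E u v) (h0 : dist E u v = 0) : u = v := by
  by_contra hne
  have := wdist_pos h hne
  omega

lemma wdist_one (h : E u v) (hne : u ≠ v) : dist E u v = 1 := by
  have h1 : dist E u v ≤ 1 := wdist_le ⟨[u, v],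
    ⟨⟨by simp, List.isChain_pair.mpr h⟩, rfl, rfl⟩, rfl⟩
  have h2 := wdist_pos (Relation.ReflTransGen.single h) hne
  omega

lemma wdist_eq_one_imp (h : Desc E u v) (h1 : dist E u v = 1) : E u v := by
  obtain ⟨p, hp, hl⟩ := wdist_spec h
  rw [h1] at hl
  match p, hl with
  | [a, b], _ =>
    obtain ⟨⟨-, hch⟩, hh, hg⟩ := hp
    simp [List.head?] at hh
    simp at hg
    unfold List.Chain' at hch; rw [List.isChain_pair] at hch
    rwa [hh, hg] at hch

/-- decompose through a unique parent -/
lemma desc_parent (hcv : E c v) (hpar : ∀ a, E a v → a = c) (h : Desc E u v) (hne : u ≠ v) :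
    Desc E u c ∧ dist E u v = dist E u c + 1 := by
  have hdc : Desc E u c := by
    obtain ⟨p, hp⟩ := walk_of_desc h
    have hl2 : 2 ≤ p.length := by
      have : p.length ≠ 0 := by simpa using hp.1.1
      rcases Nat.lt_or_ge p.length 2 with hlt | hge
      · interval_cases hl : p.length
        · omega
        · exact absurd (walk_len_one hp hl) hne
      · exact hge
    obtain ⟨p', c', -, -, hp', hc'⟩ := walk_split_s9 hp hl2
    rw [hpar c' hc'] at hp'
    exact desc_of_walk hp'
  refine ⟨hdc, ?_⟩
  have hle : dist E u v ≤ dist E u c + 1 := by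
    obtain ⟨p, hp, hl⟩ := wdist_spec hdc
    exact wdist_le ⟨p ++ [v], walk_snoc hp hcv, by simp; omega⟩
  have hge : dist E u c + 1 ≤ dist E u v := by
    obtain ⟨p, hp, hl⟩ := wdist_spec h
    have hl2 : 2 ≤ p.length := by
      have h1 := wdist_pos h hne
      omega
    obtain ⟨p', c', hpeq, hne', hp', hc'⟩ := walk_split_s9 hp hl2
    rw [hpar c' hc'] at hp'
    have : dist E u c ≤ p'.length - 1 := wdist_le ⟨p', hp', by
      have : p'.length ≠ 0 := by simpa using hne'
      omega⟩
    have hplen : p.length = p'.length + 1 := by rw [hpeq]; simp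
    omega
  omega

end Dist

section Deg

variable {V : Type} [Fintype V] {E : V → V → Prop} {x i j u v c : V}

lemma leaf_desc_eq (hu : IsLeaf E u) (h : Desc E u v) : u = v := by
  rcases (Relation.reflTransGen_iff_eq_or_transGen (r := E)).mp h with rfl | htg
  · rfl
  · obtain ⟨m, hm, -⟩ := Relation.TransGen.head'_iff.mp htg
    exact absurd hm (hu m)

lemma uniq_parent (ht : IsTreeNode E v) (hcv : E c v) : ∀ a, E a v → a = c := by
  intro a ha
  by_contra hne
  have hsub : {a, c} ⊆ {u | E u v} := by
    rintro z (rfl | rfl) <;> simpa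
  have h2 : 2 ≤ indeg E v := by
    rw [indeg, ← Set.ncard_pair hne]
    exact Set.ncard_le_ncard hsub (Set.toFinite _)
  rw [IsTreeNode] at ht
  omega

lemma outdeg_le_two (hqb : QuasiBinary E) (v : V) : outdeg E v ≤ 2 := by
  have := hqb v
  simp [Set.mem_insert_iff, Prod.ext_iff] at this
  omega

lemma indeg_le_two (hqb : QuasiBinary E) (v : V) : indeg E v ≤ 2 := by
  have := hqb v
  simp [Set.mem_insert_iff, Prod.ext_iff] at this
  omega

lemma children_eq (hqb : QuasiBinary E) (hxi : E x i) (hxj : E x j) (hij : i ≠ j) :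
    ∀ w, E x w → w = i ∨ w = j := by
  have hsub : {i, j} ⊆ {w | E x w} := by rintro z (rfl | rfl) <;> simpa
  have h2 : 2 ≤ outdeg E x := by
    rw [outdeg, ← Set.ncard_pair hij]
    exact Set.ncard_le_ncard hsub (Set.toFinite _)
  have hle := outdeg_le_two hqb x
  have heq : {i, j} = {w | E x w} :=
    Set.eq_of_subset_of_ncard_le hsub (by rw [Set.ncard_pair hij]; exact hle) (Set.toFinite _)
  intro w hw
  have : w ∈ ({i, j} : Set V) := heq ▸ hw
  simpa using this

lemma second_parent (hqb : QuasiBinary E) (hxi : E x i) (hnt : ¬ IsTreeNode E i) :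
    ∃ y, E y i ∧ y ≠ x := by
  by_contra h
  push_neg at h
  have hsub : {u | E u i} ⊆ {x} := fun u hu => h u hu
  have : indeg E i ≤ 1 := by
    rw [indeg]
    calc {u | E u i}.ncard ≤ ({x} : Set V).ncard := Set.ncard_le_ncard hsub (Set.toFinite _)
    _ = 1 := Set.ncard_singleton x
  exact hnt this

lemma hybrid_of_not_tree (hxi : E x i) (hnt : ¬ IsTreeNode E i) : IsHybrid E i := by
  rw [IsTreeNode] at hnt
  rw [IsHybrid]
  omega

lemma tau_mono {τ : V → ℕ} (hqb : QuasiBinary E)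
    (hτ : ∀ u v, E u v → (IsTreeNode E v → τ u < τ v) ∧ (IsHybrid E v → τ u = τ v))
    (h : Desc E u v) : τ u ≤ τ v := by
  induction h with
  | refl => exact le_refl _
  | @tail b c hd he ih =>
    have hstep : τ b ≤ τ c := by
      by_cases ht : IsTreeNode E c
      · exact le_of_lt ((hτ b c he).1 ht)
      · exact le_of_eq ((hτ b c he).2 (hybrid_of_not_tree he ht))
    omega

end Deg

section CSAsec

variable {V : Type} [Fintype V] {E : V → V → Prop} {r u v x i j k y z : V} {p q : List V}

lemma CSA_comm : CSAset E u v = CSAset E v u := by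
  ext x
  exact ⟨fun ⟨h1, h2, h3⟩ => ⟨h2, h1, h3.symm⟩, fun ⟨h1, h2, h3⟩ => ⟨h2, h1, h3.symm⟩⟩

lemma lcsa_congr (h : CSAset E u v = CSAset E u' v') : lcsa E r u v = lcsa E r u' v' := by
  unfold lcsa
  congr 1
  funext x
  unfold IsLCSA
  rw [h]

lemma lcsa_comm : lcsa E r u v = lcsa E r v u := lcsa_congr CSA_comm

lemma root_mem_CSA (hnet : IsHybNet E r) (u v : V) : r ∈ CSAset E u v := by
  refine ⟨root_desc hnet.acyclic hnet.uniqueRoot u, root_desc hnet.acyclic hnet.uniqueRoot v,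
    Or.inl ⟨root_desc hnet.acyclic hnet.uniqueRoot u, fun r' p hr' hw => ?_⟩⟩
  have : r' = r := hnet.uniqueRoot r' hr'
  subst this
  exact List.mem_of_mem_head? (by rw [hw.2.1]; rfl)

lemma lcsa_isLCSA (hnet : IsHybNet E r) (u v : V) : IsLCSA E u v (lcsa E r u v) := by
  have hne : (CSAset E u v).Nonempty := ⟨r, root_mem_CSA hnet u v⟩
  have hex : ∃ x, IsLCSA E u v x := by
    have hs : {n | ∃ x ∈ CSAset E u v, height E x = n}.Nonempty :=
      ⟨height E r, r, root_mem_CSA hnet u v, rfl⟩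
    obtain ⟨x, hx, hxh⟩ := Nat.sInf_mem hs
    refine ⟨x, hx, fun y hy => ?_⟩
    rw [hxh]
    exact Nat.sInf_le ⟨y, hy, rfl⟩
  exact Classical.epsilon_spec hex

lemma lcsa_eq_of_unique (hnet : IsHybNet E r) (hy : IsLCSA E u v y)
    (huniq : ∀ z ∈ CSAset E u v, z = y ∨ height E y < height E z) : lcsa E r u v = y := by
  have hl := lcsa_isLCSA hnet u v
  rcases huniq _ hl.1 with h | h
  · exact h
  · have := hl.2 y hy.1
    omega

/-- a CSA member of two leaves differs from either leaf (other one distinct) -/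
lemma csa_ne_left (hu : IsLeaf E u) (hvne : v ≠ u) (hx : x ∈ CSAset E u v) : x ≠ u := by
  rintro rfl
  exact hvne (leaf_desc_eq hu hx.2.1).symm

end CSAsec

section Chain

variable {V : Type} [Fintype V] {E : V → V → Prop} {u v x i j k y z s : V} {p q : List V}

lemma chain'_pred (hch : List.Chain' E p) (hc : c ∈ p.tail) : ∃ d ∈ p, E d c := by
  induction p with
  | nil => simp at hc
  | cons a l ih =>
    simp at hc
    rcases l with _ | ⟨b, t⟩
    · simp at hc
    · unfold List.Chain' at hch; rw [List.isChain_cons_cons] at hch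
      simp at hc
      rcases hc with rfl | hc
      · exact ⟨a, by simp, hch.1⟩
      · obtain ⟨d, hd, hdc⟩ := ih hch.2 (by simpa using hc)
        exact ⟨d, by simp at hd ⊢; tauto, hdc⟩

lemma chain'_desc (hch : List.Chain' E (a :: l)) (hc : c ∈ a :: l) : Desc E a c := by
  induction l generalizing a with
  | nil => simp at hc; rw [hc]; exact Relation.ReflTransGen.refl
  | cons b t ih =>
    unfold List.Chain' at hch; rw [List.isChain_cons_cons] at hch
    simp at hc
    rcases hc with rfl | hc
    · exact Relation.ReflTransGen.refl
    · exact Relation.ReflTransGen.head hch.1 (ih hch.2 (by simpa using hc))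

/-- τ strictly increases into the tail of a tree path -/
lemma chain_tau {τ : V → ℕ} (hqb : QuasiBinary E)
    (hτ : ∀ u v, E u v → (IsTreeNode E v → τ u < τ v) ∧ (IsHybrid E v → τ u = τ v))
    (hw : WalkFromTo E y k p) (htail : ∀ w ∈ p.tail, IsTreeNode E w)
    (hc : c ∈ p.tail) : τ y < τ c := by
  obtain ⟨⟨hne, hch⟩, h1, h2⟩ := hw
  rcases p with _ | ⟨a, l⟩
  · simp at hne
  · have hay : a = y := by simpa using h1
    subst hay
    rcases l with _ | ⟨b, t⟩
    · simp at hc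
    · unfold List.Chain' at hch; rw [List.isChain_cons_cons] at hch
      simp at hc
      have hyb : τ a < τ b := (hτ a b hch.1).1 (htail b (by simp))
      rcases hc with rfl | hc
      · exact hyb
      · have : Desc E b c := chain'_desc hch.2 (by simp [hc])
        have := tau_mono hqb hτ this
        omega

lemma mem_tail_of_last (hw : WalkFromTo E y k p) (hl : 2 ≤ p.length) : k ∈ p.tail := by
  obtain ⟨p', c, hpeq, hne', -, -⟩ := walk_split_s9 hw hl
  subst hpeq
  rcases p' with _ | ⟨a, t⟩
  · simp at hne'
  · simp

/-- every ancestor of the end of a tree path is in its tail or an ancestor of its origin -/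
lemma chain_anc (hac : Acyclic E) : ∀ n (p : List V), p.length = n →
    ∀ y k, WalkFromTo E y k p → (∀ w ∈ p.tail, IsTreeNode E w) →
    ∀ z, Desc E z k → z ∈ p.tail ∨ Desc E z y := by
  intro n
  induction n using Nat.strong_induction_on with
  | _ n ih =>
    intro p hpl y k hw htail z hz
    rcases Nat.lt_or_ge p.length 2 with hlt | hge
    · have h1 : p.length = 1 := by
        have : p.length ≠ 0 := by simpa using hw.1.1
        omega
      have : y = k := walk_len_one hw h1
      subst this
      exact Or.inr hz
    · obtain ⟨p', c, hpeq, hne', hp', hc⟩ := walk_split_s9 hw hge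
      have hktail : k ∈ p.tail := mem_tail_of_last hw hge
      have hpar : ∀ a, E a k → a = c := uniq_parent (htail k hktail) hc
      have htail' : ∀ w ∈ p'.tail, IsTreeNode E w := by
        intro w hwm
        apply htail
        rw [hpeq]
        rcases p' with _ | ⟨a, t⟩
        · simp at hne'
        · simp at hwm ⊢; tauto
      by_cases hzk : z = k
      · exact Or.inl (hzk ▸ hktail)
      · obtain ⟨hzc, -⟩ := desc_parent hc hpar hz hzk
        have hlen' : p'.length < n := by
          rw [hpeq] at hpl; simp at hpl; omega
        rcases ih p'.length hlen' p' rfl y c hp' htail' z hzc with hm | hd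
        · left
          rw [hpeq]
          rcases p' with _ | ⟨a, t⟩
          · simp at hne'
          · simp at hm ⊢; tauto
        · exact Or.inr hd

/-- distance to the end of a tree path decomposes through its origin -/
lemma chain_dist (hac : Acyclic E) : ∀ n (p : List V), p.length = n →
    ∀ y k, WalkFromTo E y k p → (∀ w ∈ p.tail, IsTreeNode E w) →
    ∀ z, Desc E z y → dist E z k = dist E z y + (p.length - 1) := by
  intro n
  induction n using Nat.strong_induction_on with
  | _ n ih =>
    intro p hpl y k hw htail z hz
    rcases Nat.lt_or_ge p.length 2 with hlt | hge
    · have h1 : p.length = 1 := by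
        have : p.length ≠ 0 := by simpa using hw.1.1
        omega
      have : y = k := walk_len_one hw h1
      subst this
      simp [h1]
    · obtain ⟨p', c, hpeq, hne', hp', hc⟩ := walk_split_s9 hw hge
      have hktail : k ∈ p.tail := mem_tail_of_last hw hge
      have hpar : ∀ a, E a k → a = c := uniq_parent (htail k hktail) hc
      have htail' : ∀ w ∈ p'.tail, IsTreeNode E w := by
        intro w hwm
        apply htail
        rw [hpeq]
        rcases p' with _ | ⟨a, t⟩
        · simp at hne'
        · simp at hwm ⊢; tauto
      have hyc : Desc E y c := desc_of_walk hp'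
      have hyk : y ≠ k := by
        rintro rfl
        exact hac y (Relation.TransGen.tail' hyc hc)
      have hzk : z ≠ k := by
        rintro rfl
        rcases (Relation.reflTransGen_iff_eq_or_transGen (r := E)).mp hz with h | h
        · exact hyk h
        · exact hac z (Relation.TransGen.trans h (Relation.TransGen.tail' hyc hc))
      have hdzk : Desc E z k := (hz.trans hyc).tail hc
      obtain ⟨hzc, hstep⟩ := desc_parent hc hpar hdzk hzk
      have hlen' : p'.length < n := by
        rw [hpeq] at hpl; simp at hpl; omega
      have hih := ih p'.length hlen' p' rfl y c hp' htail' z hz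
      have hplen : p.length = p'.length + 1 := by rw [hpeq]; simp
      have hplpos : 1 ≤ p'.length := by
        rcases p' with _ | _
        · simp at hne'
        · simp
      omega

/-- the origin of a tree path is in every walk ending at its end, unless the walk
starts inside the tail -/
lemma chain_strict (hac : Acyclic E) : ∀ n (q : List V), q.length = n →
    ∀ (p : List V) y k s, WalkFromTo E y k p → (∀ w ∈ p.tail, IsTreeNode E w) →
    WalkFromTo E s k q → y ∈ q ∨ s ∈ p.tail := by
  intro n
  induction n using Nat.strong_induction_on with
  | _ n ih =>
    intro q hql p y k s hw htail hq
    rcases Nat.lt_or_ge p.length 2 with hplt | hpge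
    · have h1 : p.length = 1 := by
        have : p.length ≠ 0 := by simpa using hw.1.1
        omega
      have : y = k := walk_len_one hw h1
      subst this
      left
      have : q.getLast? = some y := hq.2.2
      rcases List.eq_nil_or_concat q with rfl | ⟨q', a, rfl⟩
      · simp at this
      · rw [List.concat_eq_append, List.getLast?_concat] at this
        simp at this
        rw [List.concat_eq_append, this]
        simp
    · obtain ⟨p', c, hpeq, hne', hp', hc⟩ := walk_split_s9 hw hpge
      have hktail : k ∈ p.tail := mem_tail_of_last hw hpge
      have hpar : ∀ a, E a k → a = c := uniq_parent (htail k hktail) hc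
      have htail' : ∀ w ∈ p'.tail, IsTreeNode E w := by
        intro w hwm
        apply htail
        rw [hpeq]
        rcases p' with _ | ⟨a, t⟩
        · simp at hne'
        · simp at hwm ⊢; tauto
      rcases Nat.lt_or_ge q.length 2 with hqlt | hqge
      · have h1 : q.length = 1 := by
          have : q.length ≠ 0 := by simpa using hq.1.1
          omega
        have : s = k := walk_len_one hq h1
        subst this
        exact Or.inr hktail
      · obtain ⟨q', c', hqeq, hqne', hq', hc'⟩ := walk_split_s9 hq hqge
        have hcc : c' = c := hpar c' hc'
        rw [hcc] at hq'
        have hqlen' : q'.length < n := by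
          rw [hqeq] at hql; simp at hql; omega
        rcases ih q'.length hqlen' q' rfl p' y c s hp' htail' hq' with hm | hm
        · left; rw [hqeq]; simp [hm]
        · right
          rw [hpeq]
          rcases p' with _ | ⟨a, t⟩
          · simp at hne'
          · simp at hm ⊢; tauto

end Chain


section Main

variable {V : Type} [Fintype V] {E : V → V → Prop} {r u v p₀ i j k y z : V} {p q : List V}

lemma one_le_height (hac : Acyclic E) (hleaf : IsLeaf E v) (h : Desc E u v) (hne : u ≠ v) :
    1 ≤ height E u := by
  obtain ⟨p, hp⟩ := walk_of_desc h
  have h0 : p.length ≠ 0 := by simpa using hp.1.1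
  have h1 : p.length ≠ 1 := fun h1 => hne (walk_len_one hp h1)
  have := le_height hac (n := p.length - 1) ⟨p, v, hp, hleaf, by omega⟩
  omega

lemma height_parent_of_leaves (hac : Acyclic E) (hqb : QuasiBinary E)
    (hpi : E p₀ i) (hpj : E p₀ j) (hij : i ≠ j) (hi : IsLeaf E i) (hj : IsLeaf E j) :
    height E p₀ = 1 := by
  have hchild := children_eq hqb hpi hpj hij
  have hp₀i : p₀ ≠ i := by rintro rfl; exact hi _ hpi
  have h1 : 1 ≤ height E p₀ := one_le_height hac hi (Relation.ReflTransGen.single hpi) hp₀i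
  have h2 : height E p₀ ≤ 1 := by
    unfold height
    apply csSup_le
    · exact ⟨1, [p₀, i], i, ⟨⟨by simp, List.isChain_pair.mpr hpi⟩, rfl, rfl⟩, hi, rfl⟩
    rintro n ⟨p, w, hw, hwl, hl⟩
    rcases p with _ | ⟨a, l⟩
    · exact absurd rfl hw.1.1
    · have hap : a = p₀ := by simpa using hw.2.1
      rcases l with _ | ⟨b, t⟩
      · simp at hl; omega
      · have hch := hw.1.2
        unfold List.Chain' at hch; rw [List.isChain_cons_cons] at hch
        have hbleaf : IsLeaf E b := by
          rcases hchild b (hap ▸ hch.1) with rfl | rfl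
          · exact hi
          · exact hj
        rcases t with _ | ⟨c, t'⟩
        · simp at hl; omega
        · rw [List.isChain_cons_cons] at hch
          exact absurd hch.2.1 (hbleaf c)
  omega

lemma rootwalk_len2 {c : V} (hq : WalkFromTo E u v q) (hu : IsRootNode E u) (hcv : E c v) :
    2 ≤ q.length := by
  rcases Nat.lt_or_ge q.length 2 with hlt | hge
  · have h0 : q.length ≠ 0 := by simpa using hq.1.1
    have h1 : q.length = 1 := by omega
    have : u = v := walk_len_one hq h1
    subst this
    exact absurd hcv (hu c)
  · exact hge

lemma CSA_sib_subset (hi : IsLeaf E i) (hj : IsLeaf E j) (hij : i ≠ j)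
    (hpi : E p₀ i) (hpj : E p₀ j)
    (hpar_i : ∀ a, E a i → a = p₀) (hpar_j : ∀ a, E a j → a = p₀)
    (hk : IsLeaf E k) (hki : k ≠ i) :
    CSAset E i k ⊆ CSAset E j k := by
  rintro x ⟨hxi, hxk, hsa⟩
  have hxnei : x ≠ i := by rintro rfl; exact hki (leaf_desc_eq hi hxk).symm
  have hxp : Desc E x p₀ := (desc_parent hpi hpar_i hxi hxnei).1
  have hxj : Desc E x j := hxp.tail hpj
  refine ⟨hxj, hxk, ?_⟩
  rcases hsa with hsa | hsa
  · left
    refine ⟨hxj, fun r' q hr' hq => ?_⟩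
    have hq2 : 2 ≤ q.length := rootwalk_len2 hq hr' hpj
    obtain ⟨q', c, hqeq, hqne', hq', hc⟩ := walk_split_s9 hq hq2
    have hcp : c = p₀ := hpar_j c hc
    rw [hcp] at hq'
    have hwi : WalkFromTo E r' i (q' ++ [i]) := walk_snoc hq' hpi
    have hxmem := hsa.2 r' (q' ++ [i]) hr' hwi
    rw [hqeq]
    rw [List.mem_append] at hxmem ⊢
    rcases hxmem with h | h
    · exact Or.inl h
    · simp at h
      exact absurd h hxnei
  · right; exact hsa

lemma key (hnet : IsHybNet E r) (hqb : QuasiBinary E) (htc : TreeChild E)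
    (hti : TimeConsistent E) {x : V}
    (hi : IsLeaf E i) (hj : IsLeaf E j) (hij : i ≠ j)
    (hxi : E x i) (hxj : E x j)
    (hihyb : ¬ IsTreeNode E i) (hjt : IsTreeNode E j)
    (hAll : ∀ k, IsLeaf E k → k ≠ i → k ≠ j → pathLen E r i k = pathLen E r j k) :
    False := by
  obtain ⟨τ, hτ⟩ := hti
  have hac := hnet.acyclic
  obtain ⟨y, hyi, hyx⟩ := second_parent hqb hxi hihyb
  have hhybi : IsHybrid E i := hybrid_of_not_tree hxi hihyb
  have hτx : τ x = τ i := (hτ x i hxi).2 hhybi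
  have hτy : τ y = τ i := (hτ y i hyi).2 hhybi
  have hpar_j : ∀ a, E a j → a = x := uniq_parent hjt hxj
  have hynl : ¬ IsLeaf E y := fun h => h i hyi
  obtain ⟨p, k, hw, hk, htail⟩ := exists_leaf_walk hac htc y
  have hp2 : 2 ≤ p.length := by
    rcases Nat.lt_or_ge p.length 2 with hlt | hge
    · have h0 : p.length ≠ 0 := by simpa using hw.1.1
      have h1 : p.length = 1 := by omega
      have hyk : y = k := walk_len_one hw h1
      rw [hyk] at hynl
      exact absurd hk hynl
    · exact hge
  have hktail : k ∈ p.tail := mem_tail_of_last hw hp2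
  have hki : k ≠ i := by
    rintro rfl
    exact hihyb (htail k hktail)
  have hτtail : ∀ c ∈ p.tail, τ y < τ c := fun c hc => chain_tau hqb hτ hw htail hc
  have hkj : k ≠ j := by
    rintro rfl
    obtain ⟨d, hd, hdj⟩ := chain'_pred hw.1.2 hktail
    have hdx : d = x := hpar_j d hdj
    rw [hdx] at hd
    rcases p with _ | ⟨a, t⟩
    · simp at hktail
    · have hay : a = y := by simpa using hw.2.1
      rw [hay] at hd
      simp at hd
      rcases hd with hd | hd
      · exact hyx hd.symm
      · have := hτtail x (by simpa using hd)
        omega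
  have hdyk : Desc E y k := desc_of_walk hw
  have hdistyk : dist E y k = p.length - 1 := by
    have := chain_dist hac p.length p rfl y k hw htail y Relation.ReflTransGen.refl
    rw [wdist_self] at this
    omega
  have hSAyk : StrictAnc E y k := by
    refine ⟨hdyk, fun r' q hr' hq => ?_⟩
    rcases chain_strict hac q.length q rfl p y k r' hw htail hq with h | h
    · exact h
    · obtain ⟨d, -, hd⟩ := chain'_pred hw.1.2 h
      exact absurd hd (hr' d)
  have hyCSA : y ∈ CSAset E i k := ⟨Relation.ReflTransGen.single hyi, hdyk, Or.inr hSAyk⟩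
  have huniq : ∀ z ∈ CSAset E i k, z = y ∨ height E y < height E z := by
    rintro z ⟨hzi, hzk, -⟩
    have hznot : z ∉ p.tail := by
      intro hz
      have h1 := hτtail z hz
      have h2 := tau_mono hqb hτ hzi
      omega
    rcases chain_anc hac p.length p rfl y k hw htail z hzk with h | h
    · exact absurd h hznot
    · by_cases hzy : z = y
      · exact Or.inl hzy
      · exact Or.inr (height_lt hac htc h hzy)
  have hlcsa_ik : lcsa E r i k = y := lcsa_eq_of_unique hnet ⟨hyCSA, fun z hz => by
      rcases huniq z hz with rfl | h
      · exact le_refl _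
      · omega⟩ huniq
  have hlcsa_ki : lcsa E r k i = y := by rw [lcsa_comm]; exact hlcsa_ik
  have hyi_ne : y ≠ i := by rintro rfl; exact hi _ hyi
  have hdyi : dist E y i = 1 := wdist_one hyi hyi_ne
  have hLik : pathLen E r i k = 1 + (p.length - 1) := by
    rw [pathLen, ell, ell, hlcsa_ik, hlcsa_ki, hdyi, hdistyk]
  obtain ⟨⟨hzj, hzk, -⟩, -⟩ := lcsa_isLCSA hnet j k (r := r)
  have hzj_ne : lcsa E r j k ≠ j := by
    intro hzeq
    rw [hzeq] at hzk
    exact hkj (leaf_desc_eq hj hzk).symm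
  obtain ⟨hzx, hstepj⟩ := desc_parent hxj hpar_j hzj hzj_ne
  have hznot : lcsa E r j k ∉ p.tail := by
    intro hmem
    have h1 := hτtail _ hmem
    have h2 := tau_mono hqb hτ hzx
    omega
  have hzy : Desc E (lcsa E r j k) y := by
    rcases chain_anc hac p.length p rfl y k hw htail _ hzk with h | h
    · exact absurd h hznot
    · exact h
  have hdistzk : dist E (lcsa E r j k) k = dist E (lcsa E r j k) y + (p.length - 1) := by
    have := chain_dist hac p.length p rfl y k hw htail _ hzy
    omega
  have hlcsa_kj : lcsa E r k j = lcsa E r j k := lcsa_comm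
  have hLjk : pathLen E r j k
      = (dist E (lcsa E r j k) x + 1) + (dist E (lcsa E r j k) y + (p.length - 1)) := by
    rw [pathLen, ell, ell, hlcsa_kj, hstepj, hdistzk]
  have heq := hAll k hk hki hkj
  rw [hLik, hLjk] at heq
  have e1 : lcsa E r j k = x := wdist_eq_zero hzx (by omega)
  have e2 : lcsa E r j k = y := wdist_eq_zero hzy (by omega)
  exact hyx (e2.symm.trans e1)

end Main


/-- In a quasi-binary TCTC hybridization network, leaves `i, j` are sibling
tree leaves iff `L_N(i,j) = 2` and `L_N(i,k) = L_N(j,k)` for every other leaf `k`. -/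
theorem stmt9 {V : Type} [Fintype V] (E : V → V → Prop) (r : V)
    (hnet : IsHybNet E r) (hqb : QuasiBinary E)
    (htc : TreeChild E) (hti : TimeConsistent E)
    (i j : V) (hi : IsLeaf E i) (hj : IsLeaf E j) (hij : i ≠ j) :
    (IsTreeNode E i ∧ IsTreeNode E j ∧ Sibling E i j) ↔
      (pathLen E r i j = 2 ∧
        ∀ k, IsLeaf E k → k ≠ i → k ≠ j → pathLen E r i k = pathLen E r j k) := by
  have hac := hnet.acyclic
  constructor
  · rintro ⟨hit, hjt, -, p₀, hpi, hpj⟩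
    have hpar_i : ∀ a, E a i → a = p₀ := uniq_parent hit hpi
    have hpar_j : ∀ a, E a j → a = p₀ := uniq_parent hjt hpj
    have hp₀i : p₀ ≠ i := by rintro rfl; exact hi _ hpi
    have hp₀j : p₀ ≠ j := by rintro rfl; exact hj _ hpj
    constructor
    · have hSA : StrictAnc E p₀ i := by
        refine ⟨Relation.ReflTransGen.single hpi, fun r' q hr' hq => ?_⟩
        have hq2 := rootwalk_len2 hq hr' hpi
        obtain ⟨q', c, hqeq, hqne', hq', hc⟩ := walk_split_s9 hq hq2
        have hcp : c = p₀ := hpar_i c hc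
        rw [hcp] at hq'
        rw [hqeq]
        refine List.mem_append_left _ (List.mem_of_mem_getLast? ?_)
        rw [hq'.2.2]
        rfl
      have hp₀CSA : p₀ ∈ CSAset E i j :=
        ⟨Relation.ReflTransGen.single hpi, Relation.ReflTransGen.single hpj, Or.inl hSA⟩
      obtain ⟨⟨hzi, hzj, -⟩, hzmin⟩ := lcsa_isLCSA hnet i j (r := r)
      have hzne_i : lcsa E r i j ≠ i := by
        intro h; rw [h] at hzj; exact hij (leaf_desc_eq hi hzj)
      have hzne_j : lcsa E r i j ≠ j := by
        intro h; rw [h] at hzi; exact hij (leaf_desc_eq hj hzi).symm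
      have hhz : height E (lcsa E r i j) ≤ 1 := by
        have := hzmin p₀ hp₀CSA
        rw [height_parent_of_leaves hac hqb hpi hpj hij hi hj] at this
        exact this
      have hEzi : E (lcsa E r i j) i := by
        obtain ⟨pw, hpw⟩ := walk_of_desc hzi
        have h0 : pw.length ≠ 0 := by simpa using hpw.1.1
        have h1 : pw.length ≠ 1 := fun h1 => hzne_i (walk_len_one hpw h1)
        have hle := le_height hac (n := pw.length - 1) ⟨pw, i, hpw, hi, by omega⟩
        have h2 : pw.length = 2 := by omega
        match pw, h2 with
        | [a, b], _ =>
          have ha : a = lcsa E r i j := by simpa using hpw.2.1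
          have hb : b = i := by simpa using hpw.2.2
          have := List.isChain_pair.mp hpw.1.2
          rw [ha, hb] at this; exact this
      have hEzj : E (lcsa E r i j) j := by
        obtain ⟨pw, hpw⟩ := walk_of_desc hzj
        have h0 : pw.length ≠ 0 := by simpa using hpw.1.1
        have h1 : pw.length ≠ 1 := fun h1 => hzne_j (walk_len_one hpw h1)
        have hle := le_height hac (n := pw.length - 1) ⟨pw, j, hpw, hj, by omega⟩
        have h2 : pw.length = 2 := by omega
        match pw, h2 with
        | [a, b], _ =>
          have ha : a = lcsa E r i j := by simpa using hpw.2.1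
          have hb : b = j := by simpa using hpw.2.2
          have := List.isChain_pair.mp hpw.1.2
          rw [ha, hb] at this; exact this
      have d1 : dist E (lcsa E r i j) i = 1 := wdist_one hEzi hzne_i
      have d2 : dist E (lcsa E r i j) j = 1 := wdist_one hEzj hzne_j
      rw [pathLen, ell, ell, (lcsa_comm : lcsa E r j i = lcsa E r i j), d1, d2]
    · intro k hk hki hkj
      have hCSAeq : CSAset E i k = CSAset E j k :=
        Set.Subset.antisymm
          (CSA_sib_subset hi hj hij hpi hpj hpar_i hpar_j hk hki)
          (CSA_sib_subset hj hi hij.symm hpj hpi hpar_j hpar_i hk hkj)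
      have hL : lcsa E r i k = lcsa E r j k := lcsa_congr hCSAeq
      obtain ⟨⟨hzi, hzk, -⟩, -⟩ := lcsa_isLCSA hnet i k (r := r)
      have hzne_i : lcsa E r i k ≠ i := by
        intro h; rw [h] at hzk; exact hki (leaf_desc_eq hi hzk).symm
      have hzne_j : lcsa E r i k ≠ j := by
        intro h; rw [h] at hzi; exact hij (leaf_desc_eq hj hzi).symm
      obtain ⟨hzp, hstepi⟩ := desc_parent hpi hpar_i hzi hzne_i
      have hzj : Desc E (lcsa E r i k) j := hzp.tail hpj
      obtain ⟨-, hstepj⟩ := desc_parent hpj hpar_j hzj hzne_j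
      rw [pathLen, pathLen, ell, ell, ell, ell,
          (lcsa_comm : lcsa E r k i = lcsa E r i k),
          (lcsa_comm : lcsa E r k j = lcsa E r j k), ← hL, hstepi, hstepj]
  · rintro ⟨hL2, hAll⟩
    obtain ⟨⟨hzi, hzj, -⟩, -⟩ := lcsa_isLCSA hnet i j (r := r)
    have hzne_i : lcsa E r i j ≠ i := by
      intro h; rw [h] at hzj; exact hij (leaf_desc_eq hi hzj)
    have hzne_j : lcsa E r i j ≠ j := by
      intro h; rw [h] at hzi; exact hij (leaf_desc_eq hj hzi).symm
    rw [pathLen, ell, ell, (lcsa_comm : lcsa E r j i = lcsa E r i j)] at hL2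
    have hdi : 1 ≤ dist E (lcsa E r i j) i := wdist_pos hzi hzne_i
    have hdj : 1 ≤ dist E (lcsa E r i j) j := wdist_pos hzj hzne_j
    have hExi : E (lcsa E r i j) i := wdist_eq_one_imp hzi (by omega)
    have hExj : E (lcsa E r i j) j := wdist_eq_one_imp hzj (by omega)
    have honeTree : IsTreeNode E i ∨ IsTreeNode E j := by
      by_contra h
      push_neg at h
      obtain ⟨h1, h2⟩ := h
      have hnl : ¬ IsLeaf E (lcsa E r i j) := fun h => h i hExi
      obtain ⟨w, hw, hwt⟩ := htc _ hnl
      rcases children_eq hqb hExi hExj hij w hw with rfl | rfl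
      · exact h1 hwt
      · exact h2 hwt
    have hit : IsTreeNode E i := by
      by_contra hic
      have hjt : IsTreeNode E j := honeTree.resolve_left hic
      exact key hnet hqb htc hti hi hj hij hExi hExj hic hjt hAll
    have hjt : IsTreeNode E j := by
      by_contra hjc
      exact key hnet hqb htc hti hj hi hij.symm hExj hExi hjc hit
        (fun k hk hkj hki => (hAll k hk hki hkj).symm)
    exact ⟨hit, hjt, hij, lcsa E r i j, hExi, hExj⟩
end

section
/- For any two nodes u, v of a rooted DAG N, the set CSA(u,v) of common ancestors of u and v that are strict ancestors of at least one of them is nonempty, and the element of CSA(u,v) of minimum height is unique; it is the unique element of CSA(u,v) that is a descendant of all elements of CSA(u,v). -/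
open Classical

section Stmt17Aux

variable {V : Type} {E : V → V → Prop}

lemma desc_antisymm (hacyc : Acyclic E) {x y : V} (hxy : Desc E x y) (hyx : Desc E y x) :
    x = y := by
  rcases Relation.reflTransGen_iff_eq_or_transGen.mp hxy with h | h
  · exact h.symm
  · exact absurd (Relation.TransGen.trans_right hyx h) (hacyc y)

lemma chain'_transGen : ∀ {l : List V} {a b : V}, List.Chain' E (a :: l) → b ∈ l →
    Relation.TransGen E a b := by
  intro l
  induction l with
  | nil => simp
  | cons c t ih =>
    intro a b hch hb
    have h1 : E a c := (List.isChain_cons_cons.mp hch).1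
    have h2 : List.Chain' E (c :: t) := (List.isChain_cons_cons.mp hch).2
    rcases List.mem_cons.mp hb with rfl | hb
    · exact Relation.TransGen.single h1
    · exact Relation.TransGen.head h1 (ih h2 hb)

lemma walk_nodup_s17 (hacyc : Acyclic E) : ∀ {l : List V}, List.Chain' E l → l.Nodup := by
  intro l
  induction l with
  | nil => simp
  | cons a t ih =>
    intro hch
    refine List.Nodup.cons (fun ha => ?_) (ih hch.tail)
    exact hacyc a (chain'_transGen hch ha)

lemma desc_head_mem {p : List V} {a x : V} (hch : List.Chain' E (a :: p)) (hx : x ∈ a :: p) :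
    Desc E a x := by
  rcases List.mem_cons.mp hx with rfl | hx
  · exact Relation.ReflTransGen.refl
  · exact (chain'_transGen hch hx).to_reflTransGen

lemma desc_mem_last : ∀ {p : List V} {x b : V}, List.Chain' E p → x ∈ p →
    p.getLast? = some b → Desc E x b := by
  intro p
  induction p with
  | nil => simp
  | cons a t ih =>
    intro x b hch hx hlast
    cases t with
    | nil =>
      simp only [List.getLast?_singleton, Option.some.injEq] at hlast
      simp only [List.mem_singleton] at hx
      subst hx; subst hlast
      exact Relation.ReflTransGen.refl
    | cons c t' =>
      rw [List.getLast?_cons_cons] at hlast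
      rcases List.mem_cons.mp hx with rfl | hx
      · have h1 : E x c := (List.isChain_cons_cons.mp hch).1
        exact Relation.ReflTransGen.head h1 (ih hch.tail (List.mem_cons_self) hlast)
      · exact ih hch.tail hx hlast

lemma exists_walk {u v : V} (h : Desc E u v) : ∃ p, WalkFromTo E u v p := by
  induction h with
  | refl => exact ⟨[u], ⟨by simp, List.isChain_singleton _⟩, by simp, by simp⟩
  | @tail b c hub hbc ih =>
    obtain ⟨p, ⟨hne, hch⟩, hh, hl⟩ := ih
    refine ⟨p ++ [c], ⟨by simp, ?_⟩, ?_, by simp⟩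
    · show List.IsChain E _; rw [List.isChain_append]
      refine ⟨hch, by simp, ?_⟩
      intro x hx y hy
      rw [hl] at hx
      simp only [Option.mem_def, Option.some.injEq] at hx
      simp only [List.head?_cons, Option.mem_def, Option.some.injEq] at hy
      subst hx; subst hy; exact hbc
    · cases p with
      | nil => simp at hne
      | cons a t => simpa using hh

lemma walk_head_desc {u v x : V} {p : List V} (h : WalkFromTo E u v p) (hx : x ∈ p) :
    Desc E u x := by
  obtain ⟨⟨hne, hch⟩, hh, _⟩ := h
  cases p with
  | nil => simp at hne
  | cons a t =>
    simp only [List.head?_cons, Option.some.injEq] at hh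
    subst hh
    exact desc_head_mem hch hx

lemma walk_last_desc {u v x : V} {p : List V} (h : WalkFromTo E u v p) (hx : x ∈ p) :
    Desc E x v :=
  desc_mem_last h.1.2 hx h.2.2

lemma walk_trans {u v w : V} {p q : List V} (h1 : WalkFromTo E u v p)
    (h2 : WalkFromTo E v w q) : WalkFromTo E u w (p ++ q.tail) := by
  obtain ⟨⟨hne1, hch1⟩, hh1, hl1⟩ := h1
  obtain ⟨⟨hne2, hch2⟩, hh2, hl2⟩ := h2
  cases q with
  | nil => simp at hne2
  | cons b t =>
    simp only [List.head?_cons, Option.some.injEq] at hh2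
    subst hh2
    refine ⟨⟨by simp [hne1], ?_⟩, ?_, ?_⟩
    · show List.IsChain E _; rw [List.isChain_append]
      refine ⟨hch1, hch2.tail, ?_⟩
      intro x hx y hy
      rw [hl1] at hx
      simp only [Option.mem_def, Option.some.injEq] at hx
      subst hx
      exact (List.isChain_cons.mp hch2).1 y hy
    · cases p with
      | nil => simp at hne1
      | cons a s => simpa using hh1
    · cases t with
      | nil =>
        simp only [List.getLast?_singleton, Option.some.injEq] at hl2
        subst hl2
        simpa using hl1
      | cons c t' =>
        rw [List.getLast?_cons_cons] at hl2
        simp only [List.tail_cons]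
        rw [List.getLast?_append_of_ne_nil p (List.cons_ne_nil c t')]
        exact hl2

variable [Fintype V]

lemma wf_fwd (hacyc : Acyclic E) :
    WellFounded (fun a b : V => Relation.TransGen E b a) := by
  have ht : IsTrans V (fun a b : V => Relation.TransGen E b a) :=
    ⟨fun a b c h1 h2 => h2.trans h1⟩
  have hi : IsIrrefl V (fun a b : V => Relation.TransGen E b a) :=
    ⟨fun a h => hacyc a h⟩
  exact Finite.wellFounded_of_trans_of_irrefl _

lemma wf_bwd (hacyc : Acyclic E) :
    WellFounded (fun a b : V => Relation.TransGen E a b) := by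
  have ht : IsTrans V (fun a b : V => Relation.TransGen E a b) :=
    ⟨fun a b c h1 h2 => h1.trans h2⟩
  have hi : IsIrrefl V (fun a b : V => Relation.TransGen E a b) :=
    ⟨fun a h => hacyc a h⟩
  exact Finite.wellFounded_of_trans_of_irrefl _

lemma exists_leaf_desc (hacyc : Acyclic E) (v : V) :
    ∃ w, Desc E v w ∧ IsLeaf E w := by
  induction v using (wf_fwd hacyc).induction with
  | _ v ih =>
    by_cases h : IsLeaf E v
    · exact ⟨v, Relation.ReflTransGen.refl, h⟩
    · simp only [IsLeaf, not_forall, not_not] at h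
      obtain ⟨w, hw⟩ := h
      obtain ⟨x, hx1, hx2⟩ := ih w (Relation.TransGen.single hw)
      exact ⟨x, Relation.ReflTransGen.head hw hx1, hx2⟩

lemma root_desc_all (hacyc : Acyclic E) {r : V} (hroot : IsRootNode E r)
    (huniq : ∀ x, IsRootNode E x → x = r) (v : V) : Desc E r v := by
  induction v using (wf_bwd hacyc).induction with
  | _ v ih =>
    by_cases h : ∃ u, E u v
    · obtain ⟨w, hw⟩ := h
      exact (ih w (Relation.TransGen.single hw)).tail hw
    · push_neg at h
      have : v = r := huniq v h
      subst this
      exact Relation.ReflTransGen.refl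

lemma root_strictAnc (hacyc : Acyclic E) {r : V} (hroot : IsRootNode E r)
    (huniq : ∀ x, IsRootNode E x → x = r) (v : V) : StrictAnc E r v := by
  refine ⟨root_desc_all hacyc hroot huniq v, fun r' p hr' hp => ?_⟩
  have : r' = r := huniq r' hr'
  subst this
  obtain ⟨⟨hne, _⟩, hh, _⟩ := hp
  cases p with
  | nil => simp at hne
  | cons a t =>
    simp only [List.head?_cons, Option.some.injEq] at hh
    subst hh
    exact List.mem_cons_self

lemma root_mem_CSA_s17 (hacyc : Acyclic E) {r : V} (hroot : IsRootNode E r)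
    (huniq : ∀ x, IsRootNode E x → x = r) (u v : V) : r ∈ CSAset E u v :=
  ⟨root_desc_all hacyc hroot huniq u, root_desc_all hacyc hroot huniq v,
    Or.inl (root_strictAnc hacyc hroot huniq u)⟩

lemma heightSet_bddAbove (hacyc : Acyclic E) (v : V) :
    BddAbove {n | ∃ p w, WalkFromTo E v w p ∧ IsLeaf E w ∧ p.length = n + 1} := by
  refine ⟨Fintype.card V, fun n hn => ?_⟩
  obtain ⟨p, w, hw, _, hlen⟩ := hn
  have h1 : p.Nodup := walk_nodup_s17 hacyc hw.1.2
  have h2 := h1.length_le_card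
  omega

lemma heightSet_nonempty (hacyc : Acyclic E) (v : V) :
    Set.Nonempty {n | ∃ p w, WalkFromTo E v w p ∧ IsLeaf E w ∧ p.length = n + 1} := by
  obtain ⟨w, hw, hleaf⟩ := exists_leaf_desc hacyc v
  obtain ⟨p, hp⟩ := exists_walk hw
  have hpos : 0 < p.length := List.length_pos_iff.mpr hp.1.1
  exact ⟨p.length - 1, p, w, hp, hleaf, by omega⟩

lemma height_lt_of_edge (hacyc : Acyclic E) {a b : V} (hab : E a b) :
    height E b < height E a := by
  have hmem : height E b ∈ {n | ∃ p w, WalkFromTo E b w p ∧ IsLeaf E w ∧ p.length = n + 1} :=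
    Nat.sSup_mem (heightSet_nonempty hacyc b) (heightSet_bddAbove hacyc b)
  obtain ⟨p, w, hw, hleaf, hlen⟩ := hmem
  obtain ⟨⟨hne, hch⟩, hh, hl⟩ := hw
  have hwalk : WalkFromTo E a w (a :: p) := by
    refine ⟨⟨by simp, ?_⟩, by simp, ?_⟩
    · show List.IsChain E _; rw [List.isChain_cons]
      refine ⟨?_, hch⟩
      intro y hy
      rw [hh] at hy
      simp only [Option.mem_def, Option.some.injEq] at hy
      subst hy; exact hab
    · cases p with
      | nil => simp at hne
      | cons c t => rw [List.getLast?_cons_cons]; exact hl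
  have hmem2 : height E b + 1 ∈
      {n | ∃ p w, WalkFromTo E a w p ∧ IsLeaf E w ∧ p.length = n + 1} :=
    ⟨a :: p, w, hwalk, hleaf, by simp [hlen]⟩
  have := le_csSup (heightSet_bddAbove hacyc a) hmem2
  exact lt_of_lt_of_le (Nat.lt_succ_self _) this

lemma height_lt_of_transGen (hacyc : Acyclic E) {a b : V}
    (h : Relation.TransGen E a b) : height E b < height E a := by
  induction h with
  | single h => exact height_lt_of_edge hacyc h
  | tail _ h ih => exact lt_trans (height_lt_of_edge hacyc h) ih

lemma csa_comparable (hacyc : Acyclic E) {r : V} (hroot : IsRootNode E r)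
    (huniq : ∀ x, IsRootNode E x → x = r) {u v x y : V}
    (hx : x ∈ CSAset E u v) (hy : y ∈ CSAset E u v) : Desc E x y ∨ Desc E y x := by
  obtain ⟨hxu, hxv, hxs⟩ := hx
  obtain ⟨hyu, hyv, _⟩ := hy
  have key : ∀ t : V, Desc E y t → StrictAnc E x t → Desc E x y ∨ Desc E y x := by
    intro t hyt hxt
    obtain ⟨p, hp⟩ := exists_walk (root_desc_all hacyc hroot huniq y)
    obtain ⟨q, hq⟩ := exists_walk hyt
    have hw := walk_trans hp hq
    have hxmem := hxt.2 r _ hroot hw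
    rcases List.mem_append.mp hxmem with h | h
    · exact Or.inl (walk_last_desc hp h)
    · exact Or.inr (walk_head_desc hq (List.mem_of_mem_tail h))
  rcases hxs with h | h
  · exact key u hyu h
  · exact key v hyv h

end Stmt17Aux

/-- In a rooted DAG, `CSA(u,v)` is nonempty, has a unique element of
minimum height, and this element is the unique element of `CSA(u,v)` that is a descendant
of all elements of `CSA(u,v)`. -/
theorem stmt17 {V : Type} [Fintype V] (E : V → V → Prop) (r : V)
    (hacyc : Acyclic E) (hroot : IsRootNode E r) (huniq : ∀ x, IsRootNode E x → x = r)
    (u v : V) :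
    ∃ x, IsLCSA E u v x ∧ (∀ y, IsLCSA E u v y → y = x) ∧
      (∀ y ∈ CSAset E u v, Desc E y x) ∧
      ∀ z, z ∈ CSAset E u v → (∀ y ∈ CSAset E u v, Desc E y z) → z = x := by
  obtain ⟨x, hxmem, hxmin⟩ := Set.exists_min_image (CSAset E u v) (height E)
    (Set.toFinite _) ⟨r, root_mem_CSA_s17 hacyc hroot huniq u v⟩
  have hdescall : ∀ y ∈ CSAset E u v, Desc E y x := by
    intro y hy
    rcases csa_comparable hacyc hroot huniq hxmem hy with h | h
    · rcases Relation.reflTransGen_iff_eq_or_transGen.mp h with h' | h'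
      · subst h'; exact Relation.ReflTransGen.refl
      · have h1 := height_lt_of_transGen hacyc h'
        have h2 := hxmin y hy
        omega
    · exact h
  refine ⟨x, ⟨hxmem, hxmin⟩, ?_, hdescall, ?_⟩
  · intro y hy
    obtain ⟨hym, hymin⟩ := hy
    have h1 := hdescall y hym
    rcases Relation.reflTransGen_iff_eq_or_transGen.mp h1 with h' | h'
    · exact h'.symm
    · have h2 := height_lt_of_transGen hacyc h'
      have h3 := hymin x hxmem
      omega
  · intro z hz hall
    exact (desc_antisymm hacyc (hall x hxmem) (hdescall z hz)).symm
end
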